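/- Let m ≥ 3, let 0 ≤ f ≤ binom(m,3) be an integer, let h be a positive integer, and let G' be an ordered graph with at least h^{m−2} vertices. Then G' contains a weighted (m,f)-subset or a homogeneous set of size h. -/

import Mathlib

open Finset
set_option linter.unusedSectionVars false
set_option maxHeartbeats 1000000

section Aux
variable {V : Type} [Fintype V] [LinearOrder V]


lemma sum_fin_sub (n : ℕ) : (∑ j : Fin n, (n - j.val)) = Nat.choose (n+1) 2 := by
  induction n with
  | zero => simp
  | succ n ih =>
    rw [Fin.sum_univ_succ]
    simp only [Fin.val_succ, Fin.val_zero, Nat.sub_zero]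
    have h1 : (∑ j : Fin n, (n + 1 - (j.val + 1))) = ∑ j : Fin n, (n - j.val) := by
      apply Finset.sum_congr rfl; intro j _; omega
    rw [h1, ih]
    have h2 : Nat.choose (n+2) 2 = Nat.choose (n+1) 1 + Nat.choose (n+1) 2 :=
      Nat.choose_succ_succ (n+1) 1
    rw [h2, Nat.choose_one_right]

lemma sum_cons (k : ℕ) (G : SimpleGraph V) [DecidableRel G.Adj] (v : V) (g : Fin k → V) :
    (∑ i : Fin (k+1), ∑ j : Fin (k+1),
      if i < j ∧ G.Adj (Fin.cons (α := fun _ => V) v g i) (Fin.cons (α := fun _ => V) v g j) then k + 1 - j.val else 0)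
    = (∑ j : Fin k, if G.Adj v (g j) then k - j.val else 0)
      + ∑ i : Fin k, ∑ j : Fin k, if i < j ∧ G.Adj (g i) (g j) then k - j.val else 0 := by
  rw [Fin.sum_univ_succ]
  congr 1
  · rw [Fin.sum_univ_succ]
    simp only [lt_self_iff_false, false_and, if_false, Fin.cons_zero, Fin.cons_succ,
      Fin.val_succ, zero_add]
    apply Finset.sum_congr rfl
    intro j _
    have hp : (0 : Fin (k+1)) < j.succ := Fin.succ_pos j
    simp only [hp, true_and]
    congr 1
    omega
  · apply Finset.sum_congr rfl
    intro i _
    rw [Fin.sum_univ_succ]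
    simp only [Fin.not_lt_zero, false_and, if_false, Fin.cons_succ, Fin.val_succ,
      Fin.succ_lt_succ_iff, zero_add]
    apply Finset.sum_congr rfl
    intro j _
    congr 1
    omega



lemma sm3 {x y z : V} (h1 : x < y) (h2 : y < z) : StrictMono ![x, y, z] := by
  intro a b hab
  fin_cases a <;> fin_cases b <;>
    simp_all [Matrix.cons_val_zero, Matrix.cons_val_one, Matrix.head_cons] <;>
    first
      | exact absurd hab (by decide)
      | exact h1
      | exact h2
      | exact h1.trans h2

lemma sm4 {x y z w : V} (h1 : x < y) (h2 : y < z) (h3 : z < w) : StrictMono ![x, y, z, w] := by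
  intro a b hab
  fin_cases a <;> fin_cases b <;>
    simp_all [Matrix.cons_val_zero, Matrix.cons_val_one, Matrix.head_cons] <;>
    first
      | exact absurd hab (by decide)
      | exact h1
      | exact h2
      | exact h3
      | exact h1.trans h2
      | exact h2.trans h3
      | exact (h1.trans h2).trans h3

lemma sum3_eval (G : SimpleGraph V) [DecidableRel G.Adj] (x y z : V) :
    (∑ i : Fin 3, ∑ j : Fin 3,
      if i < j ∧ G.Adj (![x, y, z] i) (![x, y, z] j) then 3 - j.val else 0)
    = (if G.Adj x y then 2 else 0) + (if G.Adj x z then 1 else 0)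
      + (if G.Adj y z then 1 else 0) := by
  have e2 : (![x, y, z] 2) = z := rfl
  simp only [Fin.sum_univ_three]
  norm_num [Fin.lt_def, e2]

lemma sum4_eval (G : SimpleGraph V) [DecidableRel G.Adj] (x y z w : V) :
    (∑ i : Fin 4, ∑ j : Fin 4,
      if i < j ∧ G.Adj (![x, y, z, w] i) (![x, y, z, w] j) then 4 - j.val else 0)
    = (if G.Adj x y then 3 else 0) + (if G.Adj x z then 2 else 0)
      + (if G.Adj y z then 2 else 0) + (if G.Adj x w then 1 else 0)
      + (if G.Adj y w then 1 else 0) + (if G.Adj z w then 1 else 0) := by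
  have h3 : ((3 : Fin 4) : ℕ) = 3 := rfl
  simp only [Fin.sum_univ_four]
  have e2 : (![x, y, z, w] 2) = z := rfl
  have e3 : (![x, y, z, w] 3) = w := rfl
  norm_num [Fin.lt_def, h3, e2, e3]
  ring

lemma gap_class (k f : ℕ) (h1 : Nat.choose k 3 < f) (h2 : f < Nat.choose k 2) :
    (k = 3 ∧ f = 2) ∨ (k = 4 ∧ f = 5) := by
  rcases lt_or_ge k 6 with hk | hk
  · interval_cases k <;> simp_all [Nat.choose] <;> omega
  · have hle : Nat.choose k 2 ≤ Nat.choose k 3 :=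
      Nat.choose_le_succ_of_lt_half_left (by omega)
    omega



lemma greedy (G : SimpleGraph V) [DecidableRel G.Adj] (t : ℕ) :
    ∀ (n : ℕ) (S : Finset V),
      (∀ v ∈ S, (S.filter (fun w => v < w ∧ ¬ G.Adj v w)).card < t) →
      n * t + 1 ≤ S.card + t →
      ∃ C, C ⊆ S ∧ C.card = n ∧ (∀ x ∈ C, ∀ y ∈ C, x ≠ y → G.Adj x y) := by
  intro n
  induction n with
  | zero =>
    intro S _ _
    exact ⟨∅, empty_subset _, card_empty, by simp⟩
  | succ n ihn =>
    intro S hdeg hcard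
    have hexp : (n+1)*t = n*t + t := by ring
    have ht : 1 ≤ t := by
      by_contra hc
      have ht0 : t = 0 := by omega
      rcases S.eq_empty_or_nonempty with rfl | hne
      · simp [ht0] at hcard
      · have := hdeg (S.min' hne) (S.min'_mem hne)
        omega
    have hSne : S.Nonempty := by
      rw [← Finset.card_pos]
      have : 1 ≤ n * t + 1 := by omega
      omega
    set v := S.min' hSne with hv
    have hvS : v ∈ S := S.min'_mem hSne
    set pool := S.filter (fun w => v < w ∧ G.Adj v w) with hpool
    set bad := S.filter (fun w => v < w ∧ ¬ G.Adj v w) with hbad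
    have hsub : S ⊆ insert v (pool ∪ bad) := by
      intro w hw
      rcases eq_or_ne w v with rfl | hne
      · exact mem_insert_self _ _
      · have hlt : v < w := lt_of_le_of_ne (S.min'_le w hw) (Ne.symm hne)
        by_cases hA : G.Adj v w
        · exact mem_insert_of_mem (mem_union_left _ (mem_filter.2 ⟨hw, hlt, hA⟩))
        · exact mem_insert_of_mem (mem_union_right _ (mem_filter.2 ⟨hw, hlt, hA⟩))
    have hcards : S.card ≤ 1 + (pool.card + bad.card) :=
      le_trans (card_le_card hsub) (le_trans (card_insert_le _ _) (by
        have := card_union_le pool bad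
        omega))
    have hbadlt : bad.card < t := hdeg v hvS
    have hpoolcard : n * t + 1 ≤ pool.card + t := by omega
    have hpooldeg : ∀ u ∈ pool, (pool.filter (fun w => u < w ∧ ¬ G.Adj u w)).card < t := by
      intro u hu
      have hsub2 : pool.filter (fun w => u < w ∧ ¬ G.Adj u w) ⊆
          S.filter (fun w => u < w ∧ ¬ G.Adj u w) :=
        filter_subset_filter _ (filter_subset _ _)
      exact lt_of_le_of_lt (card_le_card hsub2) (hdeg u (filter_subset _ _ hu))
    obtain ⟨C', hC'sub, hC'card, hC'cl⟩ := ihn pool hpooldeg hpoolcard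
    have hvC' : v ∉ C' := by
      intro hmem
      have := mem_filter.1 (hC'sub hmem)
      exact lt_irrefl v this.2.1
    refine ⟨insert v C', ?_, ?_, ?_⟩
    · intro x hx
      rcases mem_insert.1 hx with rfl | hx'
      · exact hvS
      · exact filter_subset _ _ (hC'sub hx')
    · rw [card_insert_of_notMem hvC', hC'card]
    · intro x hx y hy hne
      rcases mem_insert.1 hx with rfl | hx' <;> rcases mem_insert.1 hy with rfl | hy'
      · exact absurd rfl hne
      · exact (mem_filter.1 (hC'sub hy')).2.2
      · exact ((mem_filter.1 (hC'sub hx')).2.2).symm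
      · exact hC'cl x hx' y hy' hne

lemma qlemma (G : SimpleGraph V) [DecidableRel G.Adj] :
    ∀ S : Finset V,
      (∀ x ∈ S, ∀ y ∈ S, ∀ z ∈ S, x < y → y < z → ¬ G.Adj x y → (G.Adj x z ↔ G.Adj y z)) →
      S.Nonempty →
      ∃ A B : Finset V, A ⊆ S ∧ B ⊆ S ∧ A.Nonempty ∧ B.Nonempty ∧
        (∀ x ∈ A, ∀ y ∈ A, x ≠ y → G.Adj x y) ∧ (∀ x ∈ B, ∀ y ∈ B, ¬ G.Adj x y) ∧
        S.card ≤ A.card * B.card := by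
  intro S
  induction S using Finset.strongInduction with
  | _ S ih =>
    intro hQ hS
    set z := S.max' hS with hz
    have hzS : z ∈ S := S.max'_mem hS
    set S' := S.erase z with hS'
    have hltz : ∀ x ∈ S', x < z := fun x hx =>
      lt_of_le_of_ne (S.le_max' x (mem_erase.1 hx).2) (mem_erase.1 hx).1
    set A' := S'.filter (fun x => G.Adj x z) with hA'
    set B' := S'.filter (fun x => ¬ G.Adj x z) with hB'
    have hA'S : A' ⊆ S := (filter_subset _ _).trans (erase_subset _ _)
    have hB'S : B' ⊆ S := (filter_subset _ _).trans (erase_subset _ _)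
    have hcards : A'.card + B'.card + 1 = S.card := by
      have h1 : A'.card + B'.card = S'.card :=
        card_filter_add_card_filter_not _
      have h2 : S'.card = S.card - 1 := card_erase_of_mem hzS
      have h3 : 1 ≤ S.card := card_pos.2 hS
      omega
    have hcross : ∀ a ∈ A', ∀ b ∈ B', G.Adj a b := by
      intro a ha b hb
      have haz : G.Adj a z := (mem_filter.1 ha).2
      have hbz : ¬ G.Adj b z := (mem_filter.1 hb).2
      have hne : a ≠ b := fun hab => hbz (hab ▸ haz)
      rcases hne.lt_or_gt with hab | hba
      · by_contra hnadj
        have := hQ a (hA'S ha) b (hB'S hb) z hzS hab (hltz b (mem_of_mem_filter _ hb)) hnadj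
        exact hbz (this.1 haz)
      · by_contra hnadj
        have hnadj' : ¬ G.Adj b a := fun hx => hnadj hx.symm
        have := hQ b (hB'S hb) a (hA'S ha) z hzS hba (hltz a (mem_of_mem_filter _ ha)) hnadj'
        exact hbz (this.2 haz)
    have hQsub : ∀ T : Finset V, T ⊆ S →
        (∀ x ∈ T, ∀ y ∈ T, ∀ z ∈ T, x < y → y < z → ¬ G.Adj x y → (G.Adj x z ↔ G.Adj y z)) :=
      fun T hT x hx y hy z0 hz0 => hQ x (hT hx) y (hT hy) z0 (hT hz0)
    have hA'ss : A' ⊂ S := lt_of_le_of_lt (le_iff_subset.2 (filter_subset _ _))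
      (erase_ssubset hzS)
    have hB'ss : B' ⊂ S := lt_of_le_of_lt (le_iff_subset.2 (filter_subset _ _))
      (erase_ssubset hzS)
    rcases A'.eq_empty_or_nonempty with hA'e | hA'ne <;>
      rcases B'.eq_empty_or_nonempty with hB'e | hB'ne
    · -- both empty: S = {z}
      refine ⟨{z}, {z}, singleton_subset_iff.2 hzS, singleton_subset_iff.2 hzS,
        singleton_nonempty _, singleton_nonempty _, ?_, ?_, ?_⟩
      · intro x hx y hy hne
        rw [mem_singleton.1 hx, mem_singleton.1 hy] at hne
        exact absurd rfl hne
      · intro x hx y hy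
        rw [mem_singleton.1 hx, mem_singleton.1 hy]
        exact G.irrefl
      · have e1 : A'.card = 0 := by simp [hA'e]
        have e2 : B'.card = 0 := by simp [hB'e]
        simp only [card_singleton]
        omega
    · -- A' empty, B' nonempty
      obtain ⟨A2, B2, hA2, hB2, hA2ne, hB2ne, hA2cl, hB2ind, hprod2⟩ :=
        ih B' hB'ss (hQsub B' hB'S) hB'ne
      have hzB2 : z ∉ B2 := fun hmem => (mem_erase.1 (mem_of_mem_filter _ (hB2 hmem))).1 rfl
      refine ⟨A2, insert z B2, hA2.trans hB'S, insert_subset hzS (hB2.trans hB'S),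
        hA2ne, insert_nonempty _ _, hA2cl, ?_, ?_⟩
      · intro x hx y hy
        rcases mem_insert.1 hx with rfl | hx' <;> rcases mem_insert.1 hy with rfl | hy'
        · exact G.irrefl
        · exact fun hadj => (mem_filter.1 (hB2 hy')).2 hadj.symm
        · exact (mem_filter.1 (hB2 hx')).2
        · exact hB2ind x hx' y hy'
      · rw [card_insert_of_notMem hzB2]
        have e : A2.card * (B2.card + 1) = A2.card * B2.card + A2.card := by ring
        have ha2 : 1 ≤ A2.card := card_pos.2 hA2ne
        have : A'.card = 0 := by simp [hA'e]
        omega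
    · -- A' nonempty, B' empty
      obtain ⟨A1, B1, hA1, hB1, hA1ne, hB1ne, hA1cl, hB1ind, hprod1⟩ :=
        ih A' hA'ss (hQsub A' hA'S) hA'ne
      have hzA1 : z ∉ A1 := fun hmem => (mem_erase.1 (mem_of_mem_filter _ (hA1 hmem))).1 rfl
      refine ⟨insert z A1, B1, insert_subset hzS (hA1.trans hA'S), hB1.trans hA'S,
        insert_nonempty _ _, hB1ne, ?_, hB1ind, ?_⟩
      · intro x hx y hy hne
        rcases mem_insert.1 hx with rfl | hx' <;> rcases mem_insert.1 hy with rfl | hy'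
        · exact absurd rfl hne
        · exact ((mem_filter.1 (hA1 hy')).2).symm
        · exact (mem_filter.1 (hA1 hx')).2
        · exact hA1cl x hx' y hy' hne
      · rw [card_insert_of_notMem hzA1]
        have e : (A1.card + 1) * B1.card = A1.card * B1.card + B1.card := by ring
        have hb1 : 1 ≤ B1.card := card_pos.2 hB1ne
        have : B'.card = 0 := by simp [hB'e]
        omega
    · -- both nonempty
      obtain ⟨A1, B1, hA1, hB1, hA1ne, hB1ne, hA1cl, hB1ind, hprod1⟩ :=
        ih A' hA'ss (hQsub A' hA'S) hA'ne
      obtain ⟨A2, B2, hA2, hB2, hA2ne, hB2ne, hA2cl, hB2ind, hprod2⟩ :=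
        ih B' hB'ss (hQsub B' hB'S) hB'ne
      have hdisj : Disjoint A1 A2 := by
        refine disjoint_left.2 fun a haA1 haA2 => ?_
        have h1 : G.Adj a z := (mem_filter.1 (hA1 haA1)).2
        have h2 : ¬ G.Adj a z := (mem_filter.1 (hA2 haA2)).2
        exact h2 h1
      have hAcl : ∀ x ∈ A1 ∪ A2, ∀ y ∈ A1 ∪ A2, x ≠ y → G.Adj x y := by
        intro x hx y hy hne
        rcases mem_union.1 hx with hx' | hx' <;> rcases mem_union.1 hy with hy' | hy'
        · exact hA1cl x hx' y hy' hne
        · exact hcross x (hA1 hx') y (hA2 hy')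
        · exact (hcross y (hA1 hy') x (hA2 hx')).symm
        · exact hA2cl x hx' y hy' hne
      have hAcard : (A1 ∪ A2).card = A1.card + A2.card := card_union_of_disjoint hdisj
      have hAsub : A1 ∪ A2 ⊆ S := union_subset (hA1.trans hA'S) (hA2.trans hB'S)
      have ha1 : 1 ≤ A1.card := card_pos.2 hA1ne
      have ha2 : 1 ≤ A2.card := card_pos.2 hA2ne
      have hb1 : 1 ≤ B1.card := card_pos.2 hB1ne
      have hb2 : 1 ≤ B2.card := card_pos.2 hB2ne
      rcases le_or_gt (B2.card + 1) B1.card with hcmp | hcmp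
      · refine ⟨A1 ∪ A2, B1, hAsub, hB1.trans hA'S, hA1ne.mono subset_union_left,
          hB1ne, hAcl, hB1ind, ?_⟩
        have e1 : (A1.card + A2.card) * B1.card = A1.card * B1.card + A2.card * B1.card := by
          ring
        have e2 : A2.card * (B2.card + 1) ≤ A2.card * B1.card :=
          Nat.mul_le_mul_left _ hcmp
        have e3 : A2.card * (B2.card + 1) = A2.card * B2.card + A2.card := by ring
        rw [hAcard]
        omega
      · have hzB2 : z ∉ B2 := fun hmem => (mem_erase.1 (mem_of_mem_filter _ (hB2 hmem))).1 rfl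
        refine ⟨A1 ∪ A2, insert z B2, hAsub, insert_subset hzS (hB2.trans hB'S),
          hA1ne.mono subset_union_left, insert_nonempty _ _, hAcl, ?_, ?_⟩
        · intro x hx y hy
          rcases mem_insert.1 hx with rfl | hx' <;> rcases mem_insert.1 hy with rfl | hy'
          · exact G.irrefl
          · exact fun hadj => (mem_filter.1 (hB2 hy')).2 hadj.symm
          · exact (mem_filter.1 (hB2 hx')).2
          · exact hB2ind x hx' y hy'
        · rw [hAcard, card_insert_of_notMem hzB2]
          have e1 : (A1.card + A2.card) * (B2.card + 1)
              = A1.card * (B2.card + 1) + A2.card * B2.card + A2.card := by ring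
          have e2 : A1.card * B1.card ≤ A1.card * (B2.card + 1) :=
            Nat.mul_le_mul_left _ (by omega)
          omega

lemma gap3 (G : SimpleGraph V) [DecidableRel G.Adj] (h : ℕ) (hh2 : 2 ≤ h)
    (hcard : h ^ 2 ≤ Fintype.card V)
    (hno : ¬ ∃ u : Fin 3 → V, StrictMono u ∧
      (∑ i : Fin 3, ∑ j : Fin 3, if i < j ∧ G.Adj (u i) (u j) then 3 - j.val else 0) = 2) :
    ∃ S : Finset V, S.card = h ∧
      ((∀ x ∈ S, ∀ y ∈ S, x ≠ y → G.Adj x y) ∨ (∀ x ∈ S, ∀ y ∈ S, ¬ G.Adj x y)) := by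
  have h4 : 2 * 2 ≤ h * h := Nat.mul_le_mul hh2 hh2
  have hsq : h ^ 2 = h * h := sq h
  haveI : Nonempty V := Fintype.card_pos_iff.mp (by omega)
  have hU : (univ : Finset V).Nonempty := univ_nonempty
  set z := univ.max' hU with hzdef
  have win : ∀ x y w : V, x < y → y < w →
      (if G.Adj x y then 2 else 0) + (if G.Adj x w then 1 else 0)
        + (if G.Adj y w then 1 else 0) = 2 → False := by
    intro x y w hxy hyw hsum
    exact hno ⟨![x,y,w], sm3 hxy hyw, by rw [sum3_eval]; exact hsum⟩
  set P := univ.filter (fun x => x < z) with hP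
  set A := P.filter (fun x => G.Adj x z) with hA
  set B := P.filter (fun x => ¬ G.Adj x z) with hB
  have hPcard : P.card + 1 = Fintype.card V := by
    have hPe : P = univ.erase z := by
      ext x
      simp only [hP, mem_filter, mem_univ, true_and, mem_erase]
      constructor
      · intro hx; exact ⟨ne_of_lt hx, trivial⟩
      · intro hx; exact lt_of_le_of_ne (le_max' _ _ (mem_univ x)) hx.1
    rw [hPe, card_erase_of_mem (mem_univ z), card_univ]
    omega
  have hABcard : A.card + B.card = P.card := card_filter_add_card_filter_not _
  have hAcl : ∀ x ∈ A, ∀ y ∈ A, x ≠ y → G.Adj x y := by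
    intro x hx y hy hne
    have hxz := mem_filter.1 hx
    have hyz := mem_filter.1 hy
    have hxlt : x < z := (mem_filter.1 hxz.1).2
    have hylt : y < z := (mem_filter.1 hyz.1).2
    rcases hne.lt_or_gt with hxy | hyx
    · by_contra hnadj
      exact win x y z hxy hylt (by simp [hnadj, hxz.2, hyz.2])
    · by_contra hnadj
      have hnadj2 : ¬ G.Adj y x := fun hc => hnadj hc.symm
      exact win y x z hyx hxlt (by simp [hnadj2, hyz.2, hxz.2])
  have hBind : ∀ x ∈ B, ∀ y ∈ B, ¬ G.Adj x y := by
    intro x hx y hy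
    have hxz := mem_filter.1 hx
    have hyz := mem_filter.1 hy
    have hxlt : x < z := (mem_filter.1 hxz.1).2
    have hylt : y < z := (mem_filter.1 hyz.1).2
    rcases lt_trichotomy x y with hxy | rfl | hyx
    · intro hadj
      exact win x y z hxy hylt (by simp [hadj, hxz.2, hyz.2])
    · exact G.irrefl
    · intro hadj
      exact win y x z hyx hxlt (by simp [hadj.symm, hyz.2, hxz.2])
  have hzA : z ∉ A := fun hmem => lt_irrefl z (mem_filter.1 (mem_filter.1 hmem).1).2
  have hzB : z ∉ B := fun hmem => lt_irrefl z (mem_filter.1 (mem_filter.1 hmem).1).2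
  rcases le_or_gt h (A.card + 1) with hbig | hsmall
  · obtain ⟨S, hSsub, hScard⟩ := Finset.exists_subset_card_eq
      (show h ≤ (insert z A).card by rw [card_insert_of_notMem hzA]; omega)
    refine ⟨S, hScard, Or.inl ?_⟩
    intro x hx y hy hne
    rcases mem_insert.1 (hSsub hx) with rfl | hxA <;> rcases mem_insert.1 (hSsub hy) with rfl | hyA
    · exact absurd rfl hne
    · exact ((mem_filter.1 hyA).2).symm
    · exact (mem_filter.1 hxA).2
    · exact hAcl x hxA y hyA hne
  · have hBbig : h ≤ (insert z B).card := by
      rw [card_insert_of_notMem hzB]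
      have hmul : 2 * h ≤ h * h := Nat.mul_le_mul_right h hh2
      omega
    obtain ⟨S, hSsub, hScard⟩ := Finset.exists_subset_card_eq hBbig
    refine ⟨S, hScard, Or.inr ?_⟩
    intro x hx y hy
    rcases mem_insert.1 (hSsub hx) with rfl | hxB <;> rcases mem_insert.1 (hSsub hy) with rfl | hyB
    · exact G.irrefl
    · exact fun hadj => (mem_filter.1 hyB).2 hadj.symm
    · exact (mem_filter.1 hxB).2
    · exact hBind x hxB y hyB

lemma extract_hom (G : SimpleGraph V) [DecidableRel G.Adj] (h : ℕ)
    (A B : Finset V) (hAcl : ∀ x ∈ A, ∀ y ∈ A, x ≠ y → G.Adj x y)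
    (hBind : ∀ x ∈ B, ∀ y ∈ B, ¬ G.Adj x y)
    (hprod : h * h ≤ A.card * B.card) :
    ∃ S : Finset V, S.card = h ∧
      ((∀ x ∈ S, ∀ y ∈ S, x ≠ y → G.Adj x y) ∨ (∀ x ∈ S, ∀ y ∈ S, ¬ G.Adj x y)) := by
  have hcase : h ≤ A.card ∨ h ≤ B.card := by
    by_contra hc
    push_neg at hc
    have h1 : A.card + 1 ≤ h := hc.1
    have h2 : B.card + 1 ≤ h := hc.2
    have h3 : (A.card + 1) * (B.card + 1) ≤ h * h := Nat.mul_le_mul h1 h2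
    have h4 : (A.card + 1) * (B.card + 1)
        = A.card * B.card + A.card + B.card + 1 := by ring
    omega
  rcases hcase with hA | hB
  · obtain ⟨S, hSsub, hScard⟩ := Finset.exists_subset_card_eq hA
    exact ⟨S, hScard, Or.inl fun x hx y hy hne => hAcl x (hSsub hx) y (hSsub hy) hne⟩
  · obtain ⟨S, hSsub, hScard⟩ := Finset.exists_subset_card_eq hB
    exact ⟨S, hScard, Or.inr fun x hx y hy => hBind x (hSsub hx) y (hSsub hy)⟩

lemma gap4 (G : SimpleGraph V) [DecidableRel G.Adj] (h : ℕ) (hh2 : 2 ≤ h)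
    (hcard : h ^ 3 ≤ Fintype.card V)
    (hno : ¬ ∃ u : Fin 4 → V, StrictMono u ∧
      (∑ i : Fin 4, ∑ j : Fin 4, if i < j ∧ G.Adj (u i) (u j) then 4 - j.val else 0) = 5) :
    ∃ S : Finset V, S.card = h ∧
      ((∀ x ∈ S, ∀ y ∈ S, x ≠ y → G.Adj x y) ∨ (∀ x ∈ S, ∀ y ∈ S, ¬ G.Adj x y)) := by
  have hkey : 2 * (h * h) ≤ Fintype.card V := le_trans (by nlinarith) hcard
  have h8 : 2 * 2 ≤ h * h := Nat.mul_le_mul hh2 hh2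
  haveI : Nonempty V := Fintype.card_pos_iff.mp (by omega)
  have hU : (univ : Finset V).Nonempty := univ_nonempty
  set w := univ.max' hU with hwdef
  have win : ∀ x y z u : V, x < y → y < z → z < u →
      (if G.Adj x y then 3 else 0) + (if G.Adj x z then 2 else 0)
        + (if G.Adj y z then 2 else 0) + (if G.Adj x u then 1 else 0)
        + (if G.Adj y u then 1 else 0) + (if G.Adj z u then 1 else 0) = 5 → False := by
    intro x y z u h1 h2 h3 hsum
    exact hno ⟨![x,y,z,u], sm4 h1 h2 h3, by rw [sum4_eval]; exact hsum⟩
  set P := univ.filter (fun x => x < w) with hP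
  set N := P.filter (fun x => G.Adj x w) with hN
  set M := P.filter (fun x => ¬ G.Adj x w) with hM
  have hPcard : P.card + 1 = Fintype.card V := by
    have hPe : P = univ.erase w := by
      ext x
      simp only [hP, mem_filter, mem_univ, true_and, mem_erase]
      constructor
      · intro hx; exact ⟨ne_of_lt hx, trivial⟩
      · intro hx; exact lt_of_le_of_ne (le_max' _ _ (mem_univ x)) hx.1
    rw [hPe, card_erase_of_mem (mem_univ w), card_univ]
    omega
  have hNMcard : N.card + M.card = P.card := card_filter_add_card_filter_not _
  have hNmem : ∀ x ∈ N, x < w ∧ G.Adj x w := fun x hx =>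
    ⟨(mem_filter.1 (mem_filter.1 hx).1).2, (mem_filter.1 hx).2⟩
  have hMmem : ∀ x ∈ M, x < w ∧ ¬ G.Adj x w := fun x hx =>
    ⟨(mem_filter.1 (mem_filter.1 hx).1).2, (mem_filter.1 hx).2⟩
  rcases le_or_gt M.card N.card with hNM | hMN
  · -- N is big
    have hNcard : h * h ≤ N.card := by omega
    have hNne : N.Nonempty := card_pos.1 (by omega)
    have hQN : ∀ x ∈ N, ∀ y ∈ N, ∀ z ∈ N, x < y → y < z → ¬ G.Adj x y →
        (G.Adj x z ↔ G.Adj y z) := by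
      intro x hx y hy z hz hxy hyz hnadj
      obtain ⟨hxw, hxa⟩ := hNmem x hx
      obtain ⟨hyw, hya⟩ := hNmem y hy
      obtain ⟨hzw, hza⟩ := hNmem z hz
      constructor
      · intro hxz
        by_contra hnyz
        exact win x y z w hxy hyz hzw (by simp [hnadj, hxz, hnyz, hxa, hya, hza])
      · intro hyz2
        by_contra hnxz
        exact win x y z w hxy hyz hzw (by simp [hnadj, hyz2, hnxz, hxa, hya, hza])
    obtain ⟨A, B, hAsub, hBsub, hAne, hBne, hAcl, hBind, hprod⟩ := qlemma G N hQN hNne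
    exact extract_hom G h A B hAcl hBind (le_trans hNcard hprod)
  · -- M is big
    have hMcard : h * h ≤ M.card := by omega
    have hMne : M.Nonempty := card_pos.1 (by omega)
    haveI : DecidableRel Gᶜ.Adj := fun a b =>
      inferInstanceAs (Decidable (a ≠ b ∧ ¬ G.Adj a b))
    have hQM : ∀ x ∈ M, ∀ y ∈ M, ∀ z ∈ M, x < y → y < z → ¬ Gᶜ.Adj x y →
        (Gᶜ.Adj x z ↔ Gᶜ.Adj y z) := by
      intro x hx y hy z hz hxy hyz hnadj
      obtain ⟨hxw, hxa⟩ := hMmem x hx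
      obtain ⟨hyw, hya⟩ := hMmem y hy
      obtain ⟨hzw, hza⟩ := hMmem z hz
      have hadj : G.Adj x y := by
        by_contra hc
        exact hnadj ((G.compl_adj x y).2 ⟨ne_of_lt hxy, hc⟩)
      have hiff : G.Adj x z ↔ G.Adj y z := by
        constructor
        · intro hxz
          by_contra hnyz
          exact win x y z w hxy hyz hzw (by simp [hadj, hxz, hnyz, hxa, hya, hza])
        · intro hyz2
          by_contra hnxz
          exact win x y z w hxy hyz hzw (by simp [hadj, hyz2, hnxz, hxa, hya, hza])
      rw [G.compl_adj, G.compl_adj]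
      constructor
      · rintro ⟨-, hnxz⟩
        exact ⟨ne_of_lt hyz, fun hc => hnxz (hiff.2 hc)⟩
      · rintro ⟨-, hnyz⟩
        exact ⟨ne_of_lt (hxy.trans hyz), fun hc => hnyz (hiff.1 hc)⟩
    obtain ⟨A, B, hAsub, hBsub, hAne, hBne, hAcl, hBind, hprod⟩ := qlemma Gᶜ M hQM hMne
    have hAind : ∀ x ∈ A, ∀ y ∈ A, ¬ G.Adj x y := by
      intro x hx y hy
      rcases eq_or_ne x y with rfl | hne
      · exact G.irrefl
      · exact ((G.compl_adj x y).1 (hAcl x hx y hy hne)).2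
    have hBcl : ∀ x ∈ B, ∀ y ∈ B, x ≠ y → G.Adj x y := by
      intro x hx y hy hne
      by_contra hc
      exact hBind x hx y hy ((G.compl_adj x y).2 ⟨hne, hc⟩)
    exact extract_hom G h B A hBcl hAind (by
      have h1 : h * h ≤ A.card * B.card := le_trans hMcard hprod
      exact le_trans h1 (le_of_eq (Nat.mul_comm _ _)))

end Aux

lemma mainlem (h : ℕ) (hh : 0 < h) :
    ∀ (k : ℕ) (V : Type) [Fintype V] [LinearOrder V] (G : SimpleGraph V)
      [DecidableRel G.Adj] (f : ℕ), f ≤ Nat.choose (k+1) 3 → h ^ (k-1) ≤ Fintype.card V →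
      (∃ u : Fin k → V, StrictMono u ∧
        (∑ i : Fin k, ∑ j : Fin k,
          if i < j ∧ G.Adj (u i) (u j) then k - j.val else 0) = f) ∨
      (∃ S : Finset V, S.card = h ∧
        ((∀ x ∈ S, ∀ y ∈ S, x ≠ y → G.Adj x y) ∨ (∀ x ∈ S, ∀ y ∈ S, ¬ G.Adj x y))) := by
  intro k
  induction k with
  | zero =>
    intro V _ _ G _ f hf hcard
    left
    have hf0 : f = 0 := by
      have he : Nat.choose (0+1) 3 = 0 := by decide
      omega
    refine ⟨Fin.elim0, ?_, ?_⟩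
    · intro a b hab; exact a.elim0
    · simp [hf0]
  | succ k' ih =>
    intro V _ _ G _ f hf hcard
    have hcard' : h ^ k' ≤ Fintype.card V := by simpa using hcard
    by_cases hone : h = 1
    · right
      haveI : Nonempty V := Fintype.card_pos_iff.mp (by
        have h1 : (1:ℕ) ≤ Fintype.card V := by
          have := hcard'
          simp [hone] at this
          omega
        omega)
      obtain ⟨v⟩ := (inferInstance : Nonempty V)
      refine ⟨{v}, by simp [hone], Or.inr ?_⟩
      intro x hx y hy
      rw [mem_singleton.1 hx, mem_singleton.1 hy]
      exact G.irrefl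
    have hh2 : 2 ≤ h := by omega
    rcases Nat.eq_zero_or_pos k' with rfl | hk'pos
    · -- k = 1
      left
      have hf0 : f = 0 := by
        have he : Nat.choose (0+1+1) 3 = 0 := by decide
        omega
      haveI : Nonempty V := Fintype.card_pos_iff.mp (by
        have h0 := hcard'
        rw [pow_zero] at h0
        omega)
      obtain ⟨v⟩ := (inferInstance : Nonempty V)
      refine ⟨fun _ => v, ?_, ?_⟩
      · intro a b hab
        exact absurd hab (by omega)
      · simp [Fin.sum_univ_one, hf0]
    set t := h ^ (k' - 1) with htdef
    have ht1 : 1 ≤ t := Nat.one_le_pow _ _ (by omega)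
    have hps : h ^ k' = t * h := by
      rw [htdef, ← pow_succ]
      congr 1
      omega
    by_cases hlow : f ≤ Nat.choose (k' + 1) 3
    · by_cases hbig : ∃ v : V, t ≤ (univ.filter (fun w => v < w ∧ ¬ G.Adj v w)).card
      · obtain ⟨v, hv⟩ := hbig
        set P := univ.filter (fun w => v < w ∧ ¬ G.Adj v w) with hPdef
        haveI : DecidableRel (SimpleGraph.comap (Subtype.val : {x // x ∈ P} → V) G).Adj :=
          fun a b => inferInstanceAs (Decidable (G.Adj a.val b.val))
        have hcard2 : h ^ (k' - 1) ≤ Fintype.card {x // x ∈ P} := by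
          rw [Fintype.card_coe]; exact hv
        rcases ih {x // x ∈ P} (SimpleGraph.comap Subtype.val G) f hlow hcard2 with
          ⟨u', hmono', hsum'⟩ | ⟨S', hS'card, hS'prop⟩
        · left
          have hmemP : ∀ i, (u' i).val ∈ P := fun i => (u' i).2
          have hvlt : ∀ i, v < (u' i).val := fun i => (mem_filter.1 (hmemP i)).2.1
          have hvnadj : ∀ i, ¬ G.Adj v (u' i).val := fun i => (mem_filter.1 (hmemP i)).2.2
          refine ⟨Fin.cons (α := fun _ => V) v (fun i => (u' i).val), ?_, ?_⟩
          · intro a b hab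
            rcases Fin.eq_zero_or_eq_succ a with rfl | ⟨i, rfl⟩ <;>
              rcases Fin.eq_zero_or_eq_succ b with rfl | ⟨j, rfl⟩
            · exact absurd hab (lt_irrefl _)
            · rw [Fin.cons_zero, Fin.cons_succ]; exact hvlt j
            · exact absurd hab (Fin.not_lt_zero _)
            · rw [Fin.cons_succ, Fin.cons_succ]
              exact Subtype.coe_lt_coe.2 (hmono' (Fin.succ_lt_succ_iff.1 hab))
          · rw [_root_.sum_cons]
            have hz : (∑ j : Fin k',
                if G.Adj v ((fun i => (u' i).val) j) then k' - j.val else 0) = 0 :=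
              Finset.sum_eq_zero fun j _ => if_neg (hvnadj j)
            rw [hz, zero_add]
            simpa [SimpleGraph.comap_adj] using hsum'
        · right
          refine ⟨S'.map ⟨Subtype.val, Subtype.val_injective⟩,
            by rw [card_map]; exact hS'card, ?_⟩
          rcases hS'prop with hcl | hind
          · left
            intro x hx y hy hne
            obtain ⟨a, ha, rfl⟩ := mem_map.1 hx
            obtain ⟨b, hb, rfl⟩ := mem_map.1 hy
            exact hcl a ha b hb (fun hc => hne (congrArg _ hc))
          · right
            intro x hx y hy
            obtain ⟨a, ha, rfl⟩ := mem_map.1 hx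
            obtain ⟨b, hb, rfl⟩ := mem_map.1 hy
            exact hind a ha b hb
      · push_neg at hbig
        obtain ⟨C, hCsub, hCcard, hCcl⟩ := greedy G t h univ
          (fun v _ => hbig v)
          (by
            rw [card_univ]
            have hcomm : h * t = t * h := Nat.mul_comm _ _
            omega)
        right
        exact ⟨C, hCcard, Or.inl hCcl⟩
    · by_cases hhigh : Nat.choose (k' + 1) 2 ≤ f
      · have hsplit : Nat.choose (k' + 1 + 1) 3
            = Nat.choose (k' + 1) 2 + Nat.choose (k' + 1) 3 :=
          Nat.choose_succ_succ (k' + 1) 2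
        set f' := f - Nat.choose (k' + 1) 2 with hf'def
        have hf'le : f' ≤ Nat.choose (k' + 1) 3 := by omega
        by_cases hbig : ∃ v : V, t ≤ (univ.filter (fun w => v < w ∧ G.Adj v w)).card
        · obtain ⟨v, hv⟩ := hbig
          set P := univ.filter (fun w => v < w ∧ G.Adj v w) with hPdef
          haveI : DecidableRel (SimpleGraph.comap (Subtype.val : {x // x ∈ P} → V) G).Adj :=
            fun a b => inferInstanceAs (Decidable (G.Adj a.val b.val))
          have hcard2 : h ^ (k' - 1) ≤ Fintype.card {x // x ∈ P} := by
            rw [Fintype.card_coe]; exact hv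
          rcases ih {x // x ∈ P} (SimpleGraph.comap Subtype.val G) f' hf'le hcard2 with
            ⟨u', hmono', hsum'⟩ | ⟨S', hS'card, hS'prop⟩
          · left
            have hmemP : ∀ i, (u' i).val ∈ P := fun i => (u' i).2
            have hvlt : ∀ i, v < (u' i).val := fun i => (mem_filter.1 (hmemP i)).2.1
            have hvadj : ∀ i, G.Adj v (u' i).val := fun i => (mem_filter.1 (hmemP i)).2.2
            refine ⟨Fin.cons (α := fun _ => V) v (fun i => (u' i).val), ?_, ?_⟩
            · intro a b hab
              rcases Fin.eq_zero_or_eq_succ a with rfl | ⟨i, rfl⟩ <;>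
                rcases Fin.eq_zero_or_eq_succ b with rfl | ⟨j, rfl⟩
              · exact absurd hab (lt_irrefl _)
              · rw [Fin.cons_zero, Fin.cons_succ]; exact hvlt j
              · exact absurd hab (Fin.not_lt_zero _)
              · rw [Fin.cons_succ, Fin.cons_succ]
                exact Subtype.coe_lt_coe.2 (hmono' (Fin.succ_lt_succ_iff.1 hab))
            · rw [_root_.sum_cons]
              have hz : (∑ j : Fin k',
                  if G.Adj v ((fun i => (u' i).val) j) then k' - j.val else 0)
                  = ∑ j : Fin k', (k' - j.val) :=
                Finset.sum_congr rfl fun j _ => if_pos (hvadj j)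
              have hsum2 : (∑ i : Fin k', ∑ j : Fin k',
                  if i < j ∧ G.Adj (u' i).val (u' j).val then k' - j.val else 0) = f' := by
                simpa [SimpleGraph.comap_adj] using hsum'
              rw [hz, sum_fin_sub, hsum2]
              omega
          · right
            refine ⟨S'.map ⟨Subtype.val, Subtype.val_injective⟩,
              by rw [card_map]; exact hS'card, ?_⟩
            rcases hS'prop with hcl | hind
            · left
              intro x hx y hy hne
              obtain ⟨a, ha, rfl⟩ := mem_map.1 hx
              obtain ⟨b, hb, rfl⟩ := mem_map.1 hy
              exact hcl a ha b hb (fun hc => hne (congrArg _ hc))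
            · right
              intro x hx y hy
              obtain ⟨a, ha, rfl⟩ := mem_map.1 hx
              obtain ⟨b, hb, rfl⟩ := mem_map.1 hy
              exact hind a ha b hb
        · push_neg at hbig
          haveI : DecidableRel Gᶜ.Adj := fun a b =>
            inferInstanceAs (Decidable (a ≠ b ∧ ¬ G.Adj a b))
          have hfilter : ∀ v : V, univ.filter (fun w => v < w ∧ ¬ Gᶜ.Adj v w)
              = univ.filter (fun w => v < w ∧ G.Adj v w) := by
            intro v
            apply filter_congr
            intro w _
            constructor
            · rintro ⟨h1, h2⟩
              refine ⟨h1, ?_⟩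
              by_contra hc
              exact h2 ((G.compl_adj v w).2 ⟨ne_of_lt h1, hc⟩)
            · rintro ⟨h1, h2⟩
              exact ⟨h1, fun hc => ((G.compl_adj v w).1 hc).2 h2⟩
          obtain ⟨C, hCsub, hCcard, hCcl⟩ := greedy Gᶜ t h univ
            (fun v _ => by rw [hfilter v]; exact hbig v)
            (by
              rw [card_univ]
              have hcomm : h * t = t * h := Nat.mul_comm _ _
              omega)
          right
          refine ⟨C, hCcard, Or.inr ?_⟩
          intro x hx y hy
          rcases eq_or_ne x y with rfl | hne
          · exact G.irrefl
          · exact ((G.compl_adj x y).1 (hCcl x hx y hy hne)).2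
      · -- gap case
        have hgap := gap_class (k' + 1) f (by omega) (by omega)
        rcases hgap with ⟨hk, hf2⟩ | ⟨hk, hf2⟩
        · have hk2 : k' = 2 := by omega
          subst hk2
          subst hf2
          by_cases hws : ∃ u : Fin (2 + 1) → V, StrictMono u ∧
              (∑ i : Fin (2 + 1), ∑ j : Fin (2 + 1),
                if i < j ∧ G.Adj (u i) (u j) then 2 + 1 - j.val else 0) = 2
          · exact Or.inl hws
          · exact Or.inr (gap3 G h hh2 hcard' (fun hc => hws hc))
        · have hk2 : k' = 3 := by omega
          subst hk2
          subst hf2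
          by_cases hws : ∃ u : Fin (3 + 1) → V, StrictMono u ∧
              (∑ i : Fin (3 + 1), ∑ j : Fin (3 + 1),
                if i < j ∧ G.Adj (u i) (u j) then 3 + 1 - j.val else 0) = 5
          · exact Or.inl hws
          · exact Or.inr (gap4 G h hh2 hcard' (fun hc => hws hc))

theorem stmt5 (m : ℕ) (hm : 3 ≤ m) (f : ℕ) (hf : f ≤ Nat.choose m 3) (h : ℕ) (hh : 0 < h)
    (V : Type) [Fintype V] [LinearOrder V] (G : SimpleGraph V) [DecidableRel G.Adj]
    (hcard : h ^ (m - 2) ≤ Fintype.card V) :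
    (∃ u : Fin (m - 1) → V, StrictMono u ∧
      (∑ i : Fin (m - 1), ∑ j : Fin (m - 1),
        if i < j ∧ G.Adj (u i) (u j) then m - (j.val + 1) else 0) = f) ∨
    (∃ S : Finset V, S.card = h ∧
      ((∀ x ∈ S, ∀ y ∈ S, x ≠ y → G.Adj x y) ∨ (∀ x ∈ S, ∀ y ∈ S, ¬ G.Adj x y))) := by
  have hf' : f ≤ Nat.choose ((m - 1) + 1) 3 := by
    rw [show (m - 1) + 1 = m by omega]
    exact hf
  have hcard' : h ^ ((m - 1) - 1) ≤ Fintype.card V := by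
    rw [show (m - 1) - 1 = m - 2 by omega]
    exact hcard
  rcases mainlem h hh (m - 1) V G f hf' hcard' with ⟨u, hmono, hsum⟩ | hhom
  · left
    refine ⟨u, hmono, ?_⟩
    rw [← hsum]
    apply Finset.sum_congr rfl
    intro i _
    apply Finset.sum_congr rfl
    intro j _
    have hj : (j : ℕ) < m - 1 := j.isLt
    congr 1
    omega
  · right
    exact hhom
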